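/- Let G be a group, d ≥ 0, and define N_k = [G^(d), G, ..., G] (the left-normed commutator of G^(d) with k − 2^d copies of G) for k ≥ 2^d, where G^(d) denotes the d-th term of the derived series and G^(d) ≤ γ_{2^d}(G). Then [N_j, N_k] ≤ N_{j+k} for all j, k ≥ 2^d. -/

import Mathlib

/-- The three subgroups lemma, relative to a normal subgroup `K`. -/
lemma three_subgroups_aux {G : Type*} [Group G] (H₁ H₂ H₃ K : Subgroup G) [K.Normal]
    (h1 : ⁅⁅H₂, H₃⁆, H₁⁆ ≤ K) (h2 : ⁅⁅H₃, H₁⁆, H₂⁆ ≤ K) : ⁅⁅H₁, H₂⁆, H₃⁆ ≤ K := by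
  have hker : (QuotientGroup.mk' K).ker = K := QuotientGroup.ker_mk' K
  rw [← hker, ← Subgroup.map_eq_bot_iff] at h1 h2 ⊢
  simp only [Subgroup.map_commutator] at h1 h2 ⊢
  exact Subgroup.commutator_commutator_eq_bot_of_rotate h1 h2

lemma lcs_succ' {G : Type*} [Group G] (n : ℕ) :
    Subgroup.lowerCentralSeries (⊤ : Subgroup G) (n + 1) = ⁅Subgroup.lowerCentralSeries (⊤ : Subgroup G) n, (⊤ : Subgroup G)⁆ := rfl

lemma lcs_comm_le {G : Type*} [Group G] :
    ∀ b a : ℕ, ⁅Subgroup.lowerCentralSeries (⊤ : Subgroup G) a, Subgroup.lowerCentralSeries (⊤ : Subgroup G) b⁆ ≤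
      Subgroup.lowerCentralSeries (⊤ : Subgroup G) (a + b + 1) := by
  intro b
  induction b with
  | zero =>
    intro a
    rw [Subgroup.lowerCentralSeries_zero]
    exact le_of_eq (by rw [← lcs_succ', Nat.add_zero])
  | succ b ih =>
    intro a
    have key : ⁅⁅Subgroup.lowerCentralSeries (⊤ : Subgroup G) b, (⊤ : Subgroup G)⁆, Subgroup.lowerCentralSeries (⊤ : Subgroup G) a⁆ ≤
        Subgroup.lowerCentralSeries (⊤ : Subgroup G) (a + b + 2) := by
      apply three_subgroups_aux
      · -- ⁅⁅⊤, γ a⁆, γ b⁆ ≤ γ (a+b+2)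
        rw [Subgroup.commutator_comm (⊤ : Subgroup G)]
        calc ⁅⁅Subgroup.lowerCentralSeries (⊤ : Subgroup G) a, ⊤⁆, Subgroup.lowerCentralSeries (⊤ : Subgroup G) b⁆
            = ⁅Subgroup.lowerCentralSeries (⊤ : Subgroup G) (a + 1), Subgroup.lowerCentralSeries (⊤ : Subgroup G) b⁆ := by
              rw [← lcs_succ']
          _ ≤ Subgroup.lowerCentralSeries (⊤ : Subgroup G) (a + 1 + b + 1) := ih (a + 1)
          _ = Subgroup.lowerCentralSeries (⊤ : Subgroup G) (a + b + 2) := by ring_nf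
      · -- ⁅⁅γ a, γ b⁆, ⊤⁆ ≤ γ (a+b+2)
        calc ⁅⁅Subgroup.lowerCentralSeries (⊤ : Subgroup G) a, Subgroup.lowerCentralSeries (⊤ : Subgroup G) b⁆, (⊤ : Subgroup G)⁆
            ≤ ⁅Subgroup.lowerCentralSeries (⊤ : Subgroup G) (a + b + 1), (⊤ : Subgroup G)⁆ :=
              Subgroup.commutator_mono (ih a) le_rfl
          _ = Subgroup.lowerCentralSeries (⊤ : Subgroup G) (a + b + 2) := (lcs_succ' _).symm
    calc ⁅Subgroup.lowerCentralSeries (⊤ : Subgroup G) a, Subgroup.lowerCentralSeries (⊤ : Subgroup G) (b + 1)⁆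
        = ⁅⁅Subgroup.lowerCentralSeries (⊤ : Subgroup G) b, ⊤⁆, Subgroup.lowerCentralSeries (⊤ : Subgroup G) a⁆ := by
          rw [← lcs_succ', Subgroup.commutator_comm]
      _ ≤ Subgroup.lowerCentralSeries (⊤ : Subgroup G) (a + b + 2) := key
      _ = Subgroup.lowerCentralSeries (⊤ : Subgroup G) (a + (b + 1) + 1) := by ring_nf

lemma derived_le_lcs {G : Type*} [Group G] (d : ℕ) :
    derivedSeries G d ≤ Subgroup.lowerCentralSeries (⊤ : Subgroup G) (2 ^ d - 1) := by
  induction d with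
  | zero => simp
  | succ d ih =>
    have h1 : (1 : ℕ) ≤ 2 ^ d := Nat.one_le_two_pow
    calc derivedSeries G (d + 1) = ⁅derivedSeries G d, derivedSeries G d⁆ := rfl
      _ ≤ ⁅Subgroup.lowerCentralSeries (⊤ : Subgroup G) (2 ^ d - 1), Subgroup.lowerCentralSeries (⊤ : Subgroup G) (2 ^ d - 1)⁆ :=
          Subgroup.commutator_mono ih ih
      _ ≤ Subgroup.lowerCentralSeries (⊤ : Subgroup G) ((2 ^ d - 1) + (2 ^ d - 1) + 1) := lcs_comm_le _ _
      _ = Subgroup.lowerCentralSeries (⊤ : Subgroup G) (2 ^ (d + 1) - 1) := by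
          congr 1; rw [pow_succ]; omega

theorem filtration_strongly_central
    {G : Type*} [Group G] (d : ℕ)
    (N : ℕ → Subgroup G)
    (hN0 : N (2 ^ d) = derivedSeries G d)
    (hNsucc : ∀ k, 2 ^ d ≤ k → N (k + 1) = ⁅N k, (⊤ : Subgroup G)⁆) :
    ∀ j k, 2 ^ d ≤ j → 2 ^ d ≤ k → ⁅N j, N k⁆ ≤ N (j + k) := by
  have hone : (1 : ℕ) ≤ 2 ^ d := Nat.one_le_two_pow
  -- Normality of the filtration
  have hnorm : ∀ k, 2 ^ d ≤ k → (N k).Normal := by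
    intro k hk
    induction k, hk using Nat.le_induction with
    | base => rw [hN0]; exact derivedSeries_normal G d
    | succ k hk ih =>
      rw [hNsucc k hk]
      exact @Subgroup.commutator_normal G _ (N k) ⊤ ih inferInstance
  -- N k is contained in γ (k-1) (mathlib indexing)
  have hle : ∀ k, 2 ^ d ≤ k → N k ≤ Subgroup.lowerCentralSeries (⊤ : Subgroup G) (k - 1) := by
    intro k hk
    induction k, hk using Nat.le_induction with
    | base => rw [hN0]; exact derived_le_lcs d
    | succ k hk ih =>
      rw [hNsucc k hk]
      calc ⁅N k, (⊤ : Subgroup G)⁆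
          ≤ ⁅Subgroup.lowerCentralSeries (⊤ : Subgroup G) (k - 1), (⊤ : Subgroup G)⁆ :=
            Subgroup.commutator_mono ih le_rfl
        _ = Subgroup.lowerCentralSeries (⊤ : Subgroup G) (k - 1 + 1) := (lcs_succ' _).symm
        _ = Subgroup.lowerCentralSeries (⊤ : Subgroup G) (k + 1 - 1) := by congr 1; omega
  -- key: ⁅N j, γ m⁆ ≤ N (j + m + 1)
  have key : ∀ m : ℕ, ∀ j, 2 ^ d ≤ j → ⁅N j, Subgroup.lowerCentralSeries (⊤ : Subgroup G) m⁆ ≤ N (j + m + 1) := by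
    intro m
    induction m with
    | zero =>
      intro j hj
      rw [Subgroup.lowerCentralSeries_zero, ← hNsucc j hj]
    | succ m ih =>
      intro j hj
      have hnrm : (N (j + m + 2)).Normal := hnorm _ (by omega)
      have step : ⁅⁅Subgroup.lowerCentralSeries (⊤ : Subgroup G) m, (⊤ : Subgroup G)⁆, N j⁆ ≤ N (j + m + 2) := by
        apply three_subgroups_aux
        · rw [Subgroup.commutator_comm (⊤ : Subgroup G)]
          calc ⁅⁅N j, ⊤⁆, Subgroup.lowerCentralSeries (⊤ : Subgroup G) m⁆
              = ⁅N (j + 1), Subgroup.lowerCentralSeries (⊤ : Subgroup G) m⁆ := by rw [← hNsucc j hj]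
            _ ≤ N (j + 1 + m + 1) := ih (j + 1) (by omega)
            _ = N (j + m + 2) := by ring_nf
        · calc ⁅⁅N j, Subgroup.lowerCentralSeries (⊤ : Subgroup G) m⁆, (⊤ : Subgroup G)⁆
              ≤ ⁅N (j + m + 1), (⊤ : Subgroup G)⁆ :=
                Subgroup.commutator_mono (ih j hj) le_rfl
            _ = N (j + m + 2) := (hNsucc (j + m + 1) (by omega)).symm
      calc ⁅N j, Subgroup.lowerCentralSeries (⊤ : Subgroup G) (m + 1)⁆
          = ⁅⁅Subgroup.lowerCentralSeries (⊤ : Subgroup G) m, ⊤⁆, N j⁆ := by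
            rw [← lcs_succ', Subgroup.commutator_comm]
        _ ≤ N (j + m + 2) := step
        _ = N (j + (m + 1) + 1) := by ring_nf
  intro j k hj hk
  calc ⁅N j, N k⁆ ≤ ⁅N j, Subgroup.lowerCentralSeries (⊤ : Subgroup G) (k - 1)⁆ :=
        Subgroup.commutator_mono le_rfl (hle k hk)
    _ ≤ N (j + (k - 1) + 1) := key (k - 1) j hj
    _ = N (j + k) := by congr 1; omega
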